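/- Under the same hypotheses (the system φ' = -φ(ψ₁ + ψ₀), ψ₁' = ψ₁(2φ + ψ₁ + 2x) - 4β, ψ₀' = ψ₀(-2φ + ψ₀ - 2x) - 2(2β-1), with ψ₀ - ψ₁ - φ + 2(α+β)/φ = 2x), the function y = ψ₁ satisfies the fourth Painlevé equation y'' = (y')²/(2y) + (3/2)y³ + 4xy² + 2(x² - ν₁)y + ν₂/y with ν₁ = -2α - 1 and ν₂ = -8β², provided ψ₁ is nonvanishing. -/

import Mathlib

/-- Similarity reduction of the ∂NLS hierarchy: under the system
`φ' = -φ(ψ₁+ψ₀)`, `ψ₁' = ψ₁(2φ+ψ₁+2x) - 4β`, `ψ₀' = ψ₀(-2φ+ψ₀-2x) - 2(2β-1)`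
with the constraint `ψ₀ - ψ₁ - φ + 2(α+β)/φ = 2x`, the function `y = ψ₁`
satisfies the fourth Painlevé equation with `ν₁ = -2α - 1`,
`ν₂ = -8β²`, provided `ψ₁` is nonvanishing. -/
theorem psi1_solves_PIV (α β : ℂ) (φ ψ1 ψ0 : ℝ → ℂ)
    (hφ : Differentiable ℝ φ) (hψ1 : Differentiable ℝ ψ1)
    (hψ0 : Differentiable ℝ ψ0)
    (hφne : ∀ x, φ x ≠ 0) (hψ1ne : ∀ x, ψ1 x ≠ 0)
    (e1 : ∀ x : ℝ, deriv φ x = -φ x * (ψ1 x + ψ0 x))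
    (e2 : ∀ x : ℝ, deriv ψ1 x = ψ1 x * (2 * φ x + ψ1 x + 2 * (x : ℂ)) - 4 * β)
    (e3 : ∀ x : ℝ, deriv ψ0 x = ψ0 x * (-2 * φ x + ψ0 x - 2 * (x : ℂ))
        - 2 * (2 * β - 1))
    (e4 : ∀ x : ℝ, ψ0 x - ψ1 x - φ x + 2 * (α + β) / φ x = 2 * (x : ℂ)) :
    ∀ x : ℝ,
      deriv (deriv ψ1) x =
        (deriv ψ1 x)^2 / (2 * ψ1 x) + (3/2) * (ψ1 x)^3 + 4 * (x : ℂ) * (ψ1 x)^2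
          + 2 * ((x : ℂ)^2 - (-2 * α - 1)) * ψ1 x + (-8 * β^2) / ψ1 x := by
  intro x
  have hfun : deriv ψ1 = fun t : ℝ => ψ1 t * (2 * φ t + ψ1 t + 2 * (t : ℂ)) - 4 * β :=
    funext e2
  have hx : HasDerivAt (fun t : ℝ => (t : ℂ)) 1 x := by
    simpa using (hasDerivAt_id x).ofReal_comp
  have hφx := (hφ x).hasDerivAt
  have hψ1x := (hψ1 x).hasDerivAt
  have hD : HasDerivAt (fun t : ℝ => ψ1 t * (2 * φ t + ψ1 t + 2 * (t : ℂ)) - 4 * β)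
      (deriv ψ1 x * (2 * φ x + ψ1 x + 2 * (x : ℂ))
        + ψ1 x * (2 * deriv φ x + deriv ψ1 x + 2 * 1)) x := by
    exact ((hψ1x.mul (((hφx.const_mul 2).add hψ1x).add (hx.const_mul 2))).sub_const
      (4 * β))
  have key : deriv (deriv ψ1) x
      = (ψ1 x * (2 * φ x + ψ1 x + 2 * (x : ℂ)) - 4 * β) * (2 * φ x + ψ1 x + 2 * (x : ℂ))
        + ψ1 x * (2 * deriv φ x + (ψ1 x * (2 * φ x + ψ1 x + 2 * (x : ℂ)) - 4 * β) + 2 * 1) := by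
    rw [hfun]
    have h := hD.deriv
    rw [e2] at h
    simpa using h
  have hc : ψ0 x = 2 * (x : ℂ) + ψ1 x + φ x - 2 * (α + β) / φ x := by
    have := e4 x; linear_combination this
  rw [key, e2, e1, hc]
  have ha := hφne x
  have hb := hψ1ne x
  field_simp
  ring
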